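/- arXiv:0807.3477 — 3 statements merged into one kernel-verified Lean document; each statement's English description precedes it below -/
import Mathlib

section
/- Infinitesimal Taylor formula: if f : ℝ → ℝ is (n+1)-times continuously differentiable, then for every real x and every infinitesimal ε there exists an infinitesimal η such that f*(x+ε) = Σ_{k=0}^{n} f^{(k)}(x)·ε^k / k! + η·ε^n. -/
open Hyperreal Filter Topology


/-- The canonical extension of a real function to the hyperreals. -/
noncomputable def hyperExt (f : ℝ → ℝ) : ℝ* → ℝ* := fun x => Germ.map f x

private lemma taylor_tendsto' : ∀ (n : ℕ) (f : ℝ → ℝ), ContDiff ℝ n f → ∀ x : ℝ,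
    Tendsto (fun t : ℝ =>
      (f (x + t) - ∑ k ∈ Finset.range (n + 1), iteratedDeriv k f x * t ^ k / k.factorial) / t ^ n)
      (𝓝[≠] (0:ℝ)) (𝓝 0) := by
  intro n
  induction n with
  | zero =>
    intro f hf x
    simp only [Finset.sum_range_one, pow_zero, iteratedDeriv_zero, Nat.factorial_zero,
      Nat.cast_one, div_one, mul_one]
    have : Tendsto (fun t : ℝ => f (x + t) - f x) (𝓝 0) (𝓝 (f (x + 0) - f x)) := by
      exact ((hf.continuous.comp (continuous_const.add continuous_id)).tendsto 0).sub
        tendsto_const_nhds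
    simpa using this.mono_left nhdsWithin_le_nhds
  | succ n ih =>
    intro f hf x
    set c : ℕ → ℝ := fun k => iteratedDeriv k f x with hc
    have hf1 : ContDiff ℝ ((n : ℕ∞) + 1) f := by exact_mod_cast hf
    have hf' : ContDiff ℝ n (deriv f) := (contDiff_succ_iff_deriv.mp hf1).2.2
    have hdf : Differentiable ℝ f := (contDiff_succ_iff_deriv.mp hf1).1
    -- derivative of the numerator
    set u : ℝ → ℝ := fun t => f (x + t) - ∑ k ∈ Finset.range (n + 2), c k * t ^ k / k.factorial
    set u' : ℝ → ℝ := fun t =>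
      deriv f (x + t) - ∑ k ∈ Finset.range (n + 1), iteratedDeriv k (deriv f) x * t ^ k / k.factorial
    have hu : ∀ t : ℝ, HasDerivAt u (u' t) t := by
      intro t
      have h1 : HasDerivAt (fun t : ℝ => f (x + t)) (deriv f (x + t)) t := by
        have := ((hdf (x + t)).hasDerivAt).comp t (((hasDerivAt_id t).const_add x))
        simpa [Function.comp_def] using this
      have h2 : HasDerivAt (fun t : ℝ => ∑ k ∈ Finset.range (n + 2), c k * t ^ k / k.factorial)
          (∑ k ∈ Finset.range (n + 1), iteratedDeriv k (deriv f) x * t ^ k / k.factorial) t := by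
        have h3 : HasDerivAt (fun t : ℝ => ∑ k ∈ Finset.range (n + 2), c k * t ^ k / k.factorial)
            (∑ k ∈ Finset.range (n + 2), c k * (k * t ^ (k - 1)) / k.factorial) t := by
          apply HasDerivAt.fun_sum
          intro k _
          simpa [div_eq_mul_inv, mul_comm, mul_assoc, mul_left_comm] using
            ((hasDerivAt_pow k t).const_mul (c k / k.factorial))
        convert h3 using 1
        conv_rhs => rw [Finset.sum_range_succ']
        simp only [Nat.cast_zero, zero_mul, mul_zero, zero_div, add_zero]
        apply Finset.sum_congr rfl
        intro k _
        have : c (k + 1) = iteratedDeriv k (deriv f) x := by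
          show iteratedDeriv (k + 1) f x = _
          rw [iteratedDeriv_succ']
        rw [← this]
        have : ((k + 1 : ℕ) : ℝ) ≠ 0 := by positivity
        field_simp [Nat.factorial_succ]
        rw [Nat.add_sub_cancel, Nat.factorial_succ]
        push_cast
        ring
      exact h1.sub h2
    have hv : ∀ t : ℝ, HasDerivAt (fun t : ℝ => t ^ (n + 1)) ((n + 1 : ℝ) * t ^ n) t := by
      intro t; simpa using hasDerivAt_pow (n + 1) t
    have hdiv : Tendsto (fun t => u' t / ((n + 1 : ℝ) * t ^ n)) (𝓝[≠] (0:ℝ)) (𝓝 0) := by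
      have := (ih (deriv f) hf' x).mul (tendsto_const_nhds (x := ((n:ℝ) + 1)⁻¹))
      rw [zero_mul] at this
      refine this.congr fun t => ?_
      rw [div_mul_eq_div_div_swap]
      ring
    have hfa : Tendsto u (𝓝[≠] (0:ℝ)) (𝓝 0) := by
      have hcont : Continuous u := by
        apply hf.continuous.comp (by fun_prop) |>.sub
        fun_prop
      have : Tendsto u (𝓝 0) (𝓝 (u 0)) := hcont.tendsto 0
      have hu0 : u 0 = 0 := by
        show f (x + 0) - _ = 0
        rw [Finset.sum_eq_single_of_mem 0 (by simp) (fun b _ hb => by simp [zero_pow hb])]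
        simp [hc]
      rw [hu0] at this
      exact this.mono_left nhdsWithin_le_nhds
    have hga : Tendsto (fun t : ℝ => t ^ (n + 1)) (𝓝[≠] (0:ℝ)) (𝓝 0) := by
      have : Tendsto (fun t : ℝ => t ^ (n + 1)) (𝓝 0) (𝓝 ((0:ℝ) ^ (n + 1))) :=
        (continuous_pow (n + 1)).tendsto 0
      simpa using this.mono_left nhdsWithin_le_nhds
    have hg' : ∀ᶠ t in 𝓝[≠] (0:ℝ), ((n + 1 : ℝ) * t ^ n) ≠ 0 := by
      filter_upwards [eventually_mem_nhdsWithin] with t ht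
      have : t ≠ 0 := ht
      positivity
    exact HasDerivAt.lhopital_zero_nhdsNE
      (Filter.Eventually.of_forall fun t => hu t)
      (Filter.Eventually.of_forall fun t => hv t) hg' hfa hga hdiv

/-- infinitesimal Taylor formula with infinitesimal remainder. -/
theorem taylor_infinitesimal (n : ℕ) (f : ℝ → ℝ) (hf : ContDiff ℝ (n + 1) f)
    (x : ℝ) (eps : ℝ*) (heps : Infinitesimal eps) :
    ∃ η : ℝ*, Infinitesimal η ∧
      hyperExt f (x + eps) =
        (∑ k ∈ Finset.range (n + 1),
          ((iteratedDeriv k f x / k.factorial : ℝ) : ℝ*) * eps ^ k) + η * eps ^ n := by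
  set g : ℝ → ℝ := fun t =>
    (f (x + t) - ∑ k ∈ Finset.range (n + 1), iteratedDeriv k f x * t ^ k / k.factorial) / t ^ n
    with hg
  have hsum0 : (∑ k ∈ Finset.range (n + 1),
      iteratedDeriv k f x * (0:ℝ) ^ k / k.factorial) = f x := by
    rw [Finset.sum_eq_single_of_mem 0 (by simp) (fun b _ hb => by simp [zero_pow hb])]
    simp
  have hnum0 : (f (x + 0) - ∑ k ∈ Finset.range (n + 1),
      iteratedDeriv k f x * (0:ℝ) ^ k / k.factorial) = 0 := by
    rw [hsum0]; simp
  have hg0 : g 0 = 0 := by rw [hg]; simp only [hnum0, zero_div]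
  have hgt : Tendsto g (𝓝[≠] (0:ℝ)) (𝓝 0) := by
    have hfc : ContDiff ℝ n f := hf.of_le (by exact_mod_cast Nat.le_succ n)
    exact taylor_tendsto' n f hfc x
  -- the pointwise identity over ℝ
  have key : ∀ t : ℝ, f (x + t)
      = (∑ k ∈ Finset.range (n + 1), iteratedDeriv k f x / k.factorial * t ^ k) + g t * t ^ n := by
    intro t
    rcases eq_or_ne t 0 with rfl | ht
    · rcases Nat.eq_zero_or_pos n with rfl | hn
      · simp [hg0]
      · have : (0:ℝ) ^ n = 0 := zero_pow hn.ne'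
        rw [this, mul_zero, add_zero]
        rw [← hsum0, add_zero]
        exact Finset.sum_congr rfl fun k _ => by ring
    · rw [hg, div_mul_cancel₀ _ (pow_ne_zero n ht)]
      have : ∀ k ∈ Finset.range (n+1), iteratedDeriv k f x / k.factorial * t ^ k
          = iteratedDeriv k f x * t ^ k / k.factorial := by intro k _; ring
      rw [Finset.sum_congr rfl this]
      ring
  obtain ⟨u, rfl⟩ := ofSeq_surjective eps
  refine ⟨Germ.map g (ofSeq u), ?_, ?_⟩
  · -- infinitesimality of the mapped germ
    change Infinitesimal (ofSeq (fun i => g (u i)))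
    rw [infinitesimal_def]
    intro r hr
    obtain ⟨δ, hδ, H⟩ := Metric.tendsto_nhdsWithin_nhds.mp hgt r hr
    have H' : ∀ t : ℝ, |t| < δ → -r < g t ∧ g t < r := by
      intro t ht
      rcases eq_or_ne t 0 with rfl | h
      · rw [hg0]; constructor <;> [linarith; exact hr]
      · have := H (x := t) h (by simpa [Real.dist_eq] using ht)
        rw [Real.dist_eq, sub_zero, abs_lt] at this
        exact this
    obtain ⟨h1, h2⟩ := infinitesimal_def.mp heps δ hδ
    have h1' : ∀ᶠ i in hyperfilter ℕ, -δ < u i := by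
      have : ofSeq (fun _ => -δ) < ofSeq u := h1
      exact ofSeq_lt_ofSeq.mp this
    have h2' : ∀ᶠ i in hyperfilter ℕ, u i < δ := ofSeq_lt_ofSeq.mp h2
    constructor
    · show ofSeq (fun _ => -r) < ofSeq (fun i => g (u i))
      rw [ofSeq_lt_ofSeq]
      filter_upwards [h1', h2'] with i hi1 hi2
      exact (H' (u i) (abs_lt.mpr ⟨hi1, hi2⟩)).1
    · show ofSeq (fun i => g (u i)) < ofSeq (fun _ => r)
      rw [ofSeq_lt_ofSeq]
      filter_upwards [h1', h2'] with i hi1 hi2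
      exact (H' (u i) (abs_lt.mpr ⟨hi1, hi2⟩)).2
  · -- the equation, transferred pointwise
    have hsum : (∑ k ∈ Finset.range (n + 1),
          ((iteratedDeriv k f x / k.factorial : ℝ) : ℝ*) * (ofSeq u) ^ k)
        = ofSeq (fun i => ∑ k ∈ Finset.range (n + 1),
            iteratedDeriv k f x / k.factorial * (u i) ^ k) := by
      have : ∀ k ∈ Finset.range (n+1),
          ((iteratedDeriv k f x / k.factorial : ℝ) : ℝ*) * (ofSeq u) ^ k
          = ofSeq (fun i => iteratedDeriv k f x / k.factorial * (u i) ^ k) := fun k _ => rfl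
      rw [Finset.sum_congr rfl this]
      set F : ℕ → ℕ → ℝ := fun k i => iteratedDeriv k f x / k.factorial * (u i) ^ k
      have gen : ∀ s : Finset ℕ, (∑ k ∈ s, ofSeq (F k)) = ofSeq (fun i => ∑ k ∈ s, F k i) := by
        intro s
        induction s using Finset.induction with
        | empty => simp; rfl
        | insert a s hns ih =>
          rw [Finset.sum_insert hns, ih]
          show ofSeq _ = _
          congr 1
          funext i
          rw [Finset.sum_insert hns]
      exact gen _
    rw [hsum]
    show ofSeq (fun i => f (x + u i))
      = ofSeq (fun i => ∑ k ∈ Finset.range (n + 1),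
          iteratedDeriv k f x / k.factorial * (u i) ^ k) + ofSeq (fun i => g (u i) * (u i) ^ n)
    show _ = ofSeq (fun i => (∑ k ∈ Finset.range (n + 1),
          iteratedDeriv k f x / k.factorial * (u i) ^ k) + g (u i) * (u i) ^ n)
    congr 1
    funext i
    exact key (u i)
end

section
/- Nonstandard Ito formula: let φ : ℝ² → ℝ be C³ with compact support, ε = 1/α an infinitesimal, and x a function on the grid such that |Δx/Δt(t)| ≤ η·α^{2/3} for some infinitesimal η. Then Δ/Δt [φ(t, x(t))] ~ φ_t(t,x(t)) + φ_x(t,x(t))·(Δx/Δt)(t) + (ε/2)·φ_xx(t,x(t))·((Δx/Δt)(t))², where ~ denotes equality up to an infinitesimal. -/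
open Hyperreal Filter

/-- The canonical extension of a real function of two variables to the
hyperreals. -/
noncomputable def hyperExt2 (f : ℝ → ℝ → ℝ) : ℝ* → ℝ* → ℝ* :=
  fun x y => Germ.map₂ f x y

/-- MVT bound with varying bound on the interval between x and y. -/
lemma lemA' {f f' : ℝ → ℝ} {M : ℝ} {x y : ℝ}
    (hf : ∀ t, HasDerivAt f (f' t) t)
    (hb : ∀ t ∈ Set.uIcc x y, |f' t| ≤ M) :
    |f y - f x| ≤ M * |y - x| := by
  have := Convex.norm_image_sub_le_of_norm_hasDerivWithin_le
    (s := Set.uIcc x y) (f := f) (f' := f')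
    (fun t _ => (hf t).hasDerivWithinAt)
    (fun t ht => hb t ht) (convex_uIcc x y) Set.left_mem_uIcc Set.right_mem_uIcc
  simpa [Real.norm_eq_abs] using this

lemma lemA {f f' : ℝ → ℝ} {M : ℝ}
    (hf : ∀ t, HasDerivAt f (f' t) t) (hb : ∀ t, |f' t| ≤ M) (x y : ℝ) :
    |f y - f x| ≤ M * |y - x| :=
  lemA' hf (fun t _ => hb t)

lemma lemB {f f' f'' : ℝ → ℝ} {M : ℝ}
    (hf : ∀ t, HasDerivAt f (f' t) t) (hf' : ∀ t, HasDerivAt f' (f'' t) t)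
    (hb : ∀ t, |f'' t| ≤ M) (x y : ℝ) :
    |f y - f x - f' x * (y - x)| ≤ M * |y - x| * |y - x| := by
  set g : ℝ → ℝ := fun t => f t - f' x * t with hg_def
  have hg : ∀ t, HasDerivAt g (f' t - f' x) t := by
    intro t
    have := (hf t).fun_sub ((hasDerivAt_id t).const_mul (f' x))
    simpa using this
  have key : |g y - g x| ≤ M * |y - x| * |y - x| := by
    apply lemA' (f' := fun t => f' t - f' x) hg
    intro t ht
    have h1 : |f' t - f' x| ≤ M * |t - x| := lemA hf' hb x t
    have h2 : |t - x| ≤ |y - x| := by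
      have := Real.dist_le_of_mem_uIcc (x := t) (y := x) ht Set.left_mem_uIcc
      simpa [Real.dist_eq, abs_sub_comm] using this
    have hM : 0 ≤ M := le_trans (abs_nonneg _) (hb x)
    calc |f' t - f' x| ≤ M * |t - x| := h1
      _ ≤ M * |y - x| := by gcongr
  have : g y - g x = f y - f x - f' x * (y - x) := by simp [hg_def]; ring
  rwa [this] at key

lemma lemC {f f' f'' f''' : ℝ → ℝ} {M : ℝ}
    (hf : ∀ t, HasDerivAt f (f' t) t) (hf' : ∀ t, HasDerivAt f' (f'' t) t)
    (hf'' : ∀ t, HasDerivAt f'' (f''' t) t) (hb : ∀ t, |f''' t| ≤ M) (x y : ℝ) :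
    |f y - f x - f' x * (y - x) - f'' x / 2 * (y - x) ^ 2| ≤ M * (|y - x| * |y - x| * |y - x|) := by
  set g : ℝ → ℝ := fun t => f t - f' x * t - f'' x / 2 * (t - x) ^ 2 with hg_def
  have hg : ∀ t, HasDerivAt g (f' t - f' x - f'' x * (t - x)) t := by
    intro t
    have h1 : HasDerivAt (fun t : ℝ => (t - x) ^ 2) (2 * (t - x)) t := by
      simpa using (((hasDerivAt_id t).sub_const x).fun_pow 2)
    have := ((hf t).fun_sub ((hasDerivAt_id t).const_mul (f' x))).fun_sub (h1.const_mul (f'' x / 2))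
    exact this.congr_deriv (by ring)
  have key : |g y - g x| ≤ M * (|y - x| * |y - x|) * |y - x| := by
    apply lemA' (f' := fun t => f' t - f' x - f'' x * (t - x)) hg
    intro t ht
    have h1 : |f' t - f' x - f'' x * (t - x)| ≤ M * |t - x| * |t - x| := lemB hf' hf'' hb x t
    have h2 : |t - x| ≤ |y - x| := by
      have := Real.dist_le_of_mem_uIcc (x := t) (y := x) ht Set.left_mem_uIcc
      simpa [Real.dist_eq, abs_sub_comm] using this
    have hM : 0 ≤ M := le_trans (abs_nonneg _) (hb x)
    calc |f' t - f' x - f'' x * (t - x)| ≤ M * |t - x| * |t - x| := h1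
      _ ≤ M * |y - x| * |y - x| := by gcongr
      _ = M * (|y - x| * |y - x|) := by ring
  have : g y - g x = f y - f x - f' x * (y - x) - f'' x / 2 * (y - x) ^ 2 := by
    simp [hg_def]; ring
  rw [this] at key
  calc |f y - f x - f' x * (y - x) - f'' x / 2 * (y - x) ^ 2|
      ≤ M * (|y - x| * |y - x|) * |y - x| := key
    _ = M * (|y - x| * |y - x| * |y - x|) := by ring

noncomputable instance instNormedAddCommGroupCLM2 :
    NormedAddCommGroup ((ℝ × ℝ) →L[ℝ] (ℝ × ℝ) →L[ℝ] ℝ) :=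
  @ContinuousLinearMap.toNormedAddCommGroup ℝ ℝ (ℝ × ℝ) (ℝ × ℝ →L[ℝ] ℝ)
    _ _ _ _ _ _ (RingHom.id ℝ) _

noncomputable instance instNormedSpaceCLM2 :
    NormedSpace ℝ ((ℝ × ℝ) →L[ℝ] (ℝ × ℝ) →L[ℝ] ℝ) :=
  @ContinuousLinearMap.toNormedSpace ℝ ℝ (ℝ × ℝ) (ℝ × ℝ →L[ℝ] ℝ)
    _ _ _ _ _ _ (RingHom.id ℝ) _ ℝ _ _ _

noncomputable instance instNormedAddCommGroupCLM3 :
    NormedAddCommGroup ((ℝ × ℝ) →L[ℝ] (ℝ × ℝ) →L[ℝ] (ℝ × ℝ) →L[ℝ] ℝ) :=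
  @ContinuousLinearMap.toNormedAddCommGroup ℝ ℝ (ℝ × ℝ) (ℝ × ℝ →L[ℝ] ℝ × ℝ →L[ℝ] ℝ)
    _ _ _ _ _ _ (RingHom.id ℝ) _

noncomputable instance instNormedSpaceCLM3 :
    NormedSpace ℝ ((ℝ × ℝ) →L[ℝ] (ℝ × ℝ) →L[ℝ] (ℝ × ℝ) →L[ℝ] ℝ) :=
  @ContinuousLinearMap.toNormedSpace ℝ ℝ (ℝ × ℝ) (ℝ × ℝ →L[ℝ] ℝ × ℝ →L[ℝ] ℝ)
    _ _ _ _ _ _ (RingHom.id ℝ) _ ℝ _ _ _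

/-- Uniform second-order Taylor estimate in the divided form needed. -/
lemma taylor_key (φ : ℝ × ℝ → ℝ) (hφ : ContDiff ℝ 3 φ) (hsupp : HasCompactSupport φ) :
    ∃ C : ℝ, 0 ≤ C ∧ ∀ s u v h : ℝ, 0 < h →
      |(φ (s + h, v) - φ (s, u)) / h -
        (deriv (fun a => φ (a, u)) s +
         deriv (fun b => φ (s, b)) u * ((v - u) / h) +
         h / 2 * deriv (fun b => deriv (fun c => φ (s, c)) b) u * ((v - u) / h) ^ 2)|
        ≤ C * (h + |v - u| + |v - u| ^ 3 / h) := by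
  set F1 := fderiv ℝ φ with hF1def
  set F2 := fderiv ℝ F1 with hF2def
  set F3 := fderiv ℝ F2 with hF3def
  have hφd : Differentiable ℝ φ := hφ.differentiable (by norm_num)
  have hF1c : ContDiff ℝ 2 F1 := hφ.fderiv_right (by norm_num)
  have hF2c : ContDiff ℝ 1 F2 := hF1c.fderiv_right (by norm_num)
  have hF3c : Continuous F3 := (hF2c.fderiv_right (m := 0) (by norm_num)).continuous
  have hF1d : Differentiable ℝ F1 := hF1c.differentiable (by norm_num)
  have hF2d : Differentiable ℝ F2 := hF2c.differentiable (by norm_num)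
  obtain ⟨M2, hM2⟩ := ((hsupp.fderiv ℝ).fderiv ℝ).exists_bound_of_continuous hF2c.continuous
  obtain ⟨M3, hM3⟩ := (((hsupp.fderiv ℝ).fderiv ℝ).fderiv ℝ).exists_bound_of_continuous hF3c
  set M := max M2 M3 with hMdef
  have hM0 : 0 ≤ M := le_trans (norm_nonneg _) ((hM2 0).trans (le_max_left _ _))
  set e1 : ℝ × ℝ := (1, 0) with he1
  set e2 : ℝ × ℝ := (0, 1) with he2
  have he1n : ‖e1‖ ≤ 1 := by simp [he1, Prod.norm_def]
  have he2n : ‖e2‖ ≤ 1 := by simp [he2, Prod.norm_def]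
  -- uniform bounds on second and third derivatives applied to unit vectors
  have b2 : ∀ (p : ℝ × ℝ) (v w : ℝ × ℝ), ‖v‖ ≤ 1 → ‖w‖ ≤ 1 → |F2 p v w| ≤ M := by
    intro p v w hv hw
    calc |F2 p v w| = ‖F2 p v w‖ := (Real.norm_eq_abs _).symm
      _ ≤ ‖F2 p v‖ * ‖w‖ := (F2 p v).le_opNorm w
      _ ≤ (‖F2 p‖ * ‖v‖) * ‖w‖ := by gcongr; exact (F2 p).le_opNorm v
      _ ≤ (M * 1) * 1 := by
          gcongr
          exact (hM2 p).trans (le_max_left _ _)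
      _ = M := by ring
  have b3 : ∀ (p : ℝ × ℝ) (v w z : ℝ × ℝ), ‖v‖ ≤ 1 → ‖w‖ ≤ 1 → ‖z‖ ≤ 1 →
      |F3 p v w z| ≤ M := by
    intro p v w z hv hw hz
    calc |F3 p v w z| = ‖F3 p v w z‖ := (Real.norm_eq_abs _).symm
      _ ≤ ‖F3 p v w‖ * ‖z‖ := (F3 p v w).le_opNorm z
      _ ≤ (‖F3 p v‖ * ‖w‖) * ‖z‖ := by gcongr; exact (F3 p v).le_opNorm w
      _ ≤ ((‖F3 p‖ * ‖v‖) * ‖w‖) * ‖z‖ := by gcongr; exact (F3 p).le_opNorm v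
      _ ≤ ((M * 1) * 1) * 1 := by
          gcongr
          exact (hM3 p).trans (le_max_right _ _)
      _ = M := by ring
  -- slice derivatives
  have hline1 : ∀ (u a : ℝ), HasDerivAt (fun a : ℝ => (a, u)) ((1 : ℝ), (0 : ℝ)) a :=
    fun u a => (hasDerivAt_id a).prodMk (hasDerivAt_const a u)
  have hline2 : ∀ (s b : ℝ), HasDerivAt (fun b : ℝ => (s, b)) ((0 : ℝ), (1 : ℝ)) b :=
    fun s b => (hasDerivAt_const b s).prodMk (hasDerivAt_id b)
  have hd_φ_s : ∀ u a, HasDerivAt (fun a => φ (a, u)) (F1 (a, u) e1) a :=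
    fun u a => ((hφd (a, u)).hasFDerivAt).comp_hasDerivAt a (hline1 u a)
  have hd_φ_u : ∀ s b, HasDerivAt (fun b => φ (s, b)) (F1 (s, b) e2) b :=
    fun s b => ((hφd (s, b)).hasFDerivAt).comp_hasDerivAt b (hline2 s b)
  have hd_F1v_s : ∀ (v : ℝ × ℝ) (u a : ℝ),
      HasDerivAt (fun a => F1 (a, u) v) ((F2 (a, u) e1) v) a := by
    intro v u a
    have h3 : HasDerivAt (fun a : ℝ => F1 (a, u)) (F2 (a, u) e1) a :=
      ((hF1d (a, u)).hasFDerivAt).comp_hasDerivAt a (hline1 u a)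
    simpa using h3.clm_apply (hasDerivAt_const a v)
  have hd_F1v_u : ∀ (v : ℝ × ℝ) (s b : ℝ),
      HasDerivAt (fun b => F1 (s, b) v) ((F2 (s, b) e2) v) b := by
    intro v s b
    have h3 : HasDerivAt (fun b : ℝ => F1 (s, b)) (F2 (s, b) e2) b :=
      ((hF1d (s, b)).hasFDerivAt).comp_hasDerivAt b (hline2 s b)
    simpa using h3.clm_apply (hasDerivAt_const b v)
  have hd_F2vw_u : ∀ (v w : ℝ × ℝ) (s b : ℝ),
      HasDerivAt (fun b => F2 (s, b) v w) ((F3 (s, b) e2) v w) b := by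
    intro v w s b
    have h3 : HasDerivAt (fun b : ℝ => F2 (s, b)) (F3 (s, b) e2) b :=
      ((hF2d (s, b)).hasFDerivAt).comp_hasDerivAt b (hline2 s b)
    have h4 : HasDerivAt (fun b : ℝ => F2 (s, b) v) ((F3 (s, b) e2) v) b := by
      simpa using h3.clm_apply (hasDerivAt_const b v)
    simpa using h4.clm_apply (hasDerivAt_const b w)
  -- identification of the `deriv`s in the statement
  have dequ1 : ∀ s u : ℝ, deriv (fun a => φ (a, u)) s = F1 (s, u) e1 :=
    fun s u => (hd_φ_s u s).deriv
  have dequ2 : ∀ s u : ℝ, deriv (fun b => φ (s, b)) u = F1 (s, u) e2 :=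
    fun s u => (hd_φ_u s u).deriv
  have dequ22 : ∀ s u : ℝ,
      deriv (fun b => deriv (fun c => φ (s, c)) b) u = F2 (s, u) e2 e2 := by
    intro s u
    have : (fun b => deriv (fun c => φ (s, c)) b) = fun b => F1 (s, b) e2 :=
      funext fun b => (hd_φ_u s b).deriv
    rw [this]
    exact (hd_F1v_u e2 s u).deriv
  refine ⟨M, hM0, ?_⟩
  intro s u v h hh
  set k := v - u with hkdef
  have A1 : |φ (s + h, v) - φ (s, v) - F1 (s, v) e1 * h| ≤ M * |h| * |h| := by
    have := lemB (f := fun a => φ (a, v)) (f' := fun a => F1 (a, v) e1)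
      (f'' := fun a => F2 (a, v) e1 e1) (hd_φ_s v) (hd_F1v_s e1 v)
      (fun a => b2 _ _ _ he1n he1n) s (s + h)
    simpa using this
  have A2 : |F1 (s, v) e1 - F1 (s, u) e1| ≤ M * |k| := by
    have := lemA (f := fun b => F1 (s, b) e1) (f' := fun b => (F2 (s, b) e2) e1)
      (hd_F1v_u e1 s) (fun b => b2 _ _ _ he2n he1n) u v
    simpa [hkdef] using this
  have A3 : |φ (s, v) - φ (s, u) - F1 (s, u) e2 * k - F2 (s, u) e2 e2 / 2 * k ^ 2|
      ≤ M * (|k| * |k| * |k|) := by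
    have := lemC (f := fun b => φ (s, b)) (f' := fun b => F1 (s, b) e2)
      (f'' := fun b => F2 (s, b) e2 e2) (f''' := fun b => (F3 (s, b) e2) e2 e2)
      (hd_φ_u s) (hd_F1v_u e2 s) (hd_F2vw_u e2 e2 s)
      (fun b => b3 _ _ _ _ he2n he2n he2n) u v
    simpa [hkdef] using this
  set N := φ (s + h, v) - φ (s, u) - F1 (s, u) e1 * h - F1 (s, u) e2 * k
      - F2 (s, u) e2 e2 / 2 * k ^ 2 with hNdef
  have hN : |N| ≤ M * h * h + M * |k| * h + M * (|k| * |k| * |k|) := by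
    have hsplit : N = (φ (s + h, v) - φ (s, v) - F1 (s, v) e1 * h)
        + (F1 (s, v) e1 - F1 (s, u) e1) * h
        + (φ (s, v) - φ (s, u) - F1 (s, u) e2 * k - F2 (s, u) e2 e2 / 2 * k ^ 2) := by
      rw [hNdef]; ring
    calc |N| ≤ |φ (s + h, v) - φ (s, v) - F1 (s, v) e1 * h|
        + |(F1 (s, v) e1 - F1 (s, u) e1) * h|
        + |φ (s, v) - φ (s, u) - F1 (s, u) e2 * k - F2 (s, u) e2 e2 / 2 * k ^ 2| := by
          rw [hsplit]; exact (abs_add_le _ _).trans (by gcongr; exact abs_add_le _ _)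
      _ ≤ M * |h| * |h| + (M * |k|) * |h| + M * (|k| * |k| * |k|) := by
          rw [abs_mul]; gcongr
      _ = M * h * h + M * |k| * h + M * (|k| * |k| * |k|) := by
          rw [abs_of_pos hh]
  have hgoal_eq : (φ (s + h, v) - φ (s, u)) / h -
      (deriv (fun a => φ (a, u)) s + deriv (fun b => φ (s, b)) u * ((v - u) / h) +
        h / 2 * deriv (fun b => deriv (fun c => φ (s, c)) b) u * ((v - u) / h) ^ 2)
      = N / h := by
    rw [dequ1, dequ2, dequ22, hNdef, hkdef]
    field_simp
    ring
  rw [hgoal_eq, abs_div, abs_of_pos hh]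
  calc |N| / h ≤ (M * h * h + M * |k| * h + M * (|k| * |k| * |k|)) / h := by
        gcongr
    _ = (M * h * h + M * |k| * h + M * |k| ^ 3) / h := by ring_nf
    _ = M * (h + |k| + |k| ^ 3 / h) := by
        field_simp

open Hyperreal

lemma infinitesimal_of_abs_le {z w : ℝ*} (h : |z| ≤ w) (hw : Infinitesimal w) :
    Infinitesimal z := by
  rw [Hyperreal.infinitesimal_def] at hw ⊢
  intro r hr
  exact abs_lt.mp (lt_of_le_of_lt h (hw r hr).2)

lemma infinitesimal_const_mul (c : ℝ) {w : ℝ*} (hw : Infinitesimal w) :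
    Infinitesimal ((c : ℝ*) * w) := by
  have : IsSt ((c : ℝ*) * w) (c * 0) := (isSt_refl_real c).mul hw
  rwa [mul_zero] at this


/-- Nonstandard Ito formula: let `φ : ℝ² → ℝ` be `C³` with
compact support, let `α = ω` be the infinite hypernatural and `eps = ω⁻¹` the
corresponding infinitesimal grid step.  If the grid function `x` satisfies
`|Δx/Δt(t)| ≤ η·α^{2/3}` with `η` infinitesimal, then the grid derivative of
`t ↦ φ(t, x(t))` is infinitesimally close to
`φ_t + φ_x·(Δx/Δt) + (eps/2)·φ_xx·(Δx/Δt)²`. -/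
theorem nonstandard_ito_formula (φ : ℝ × ℝ → ℝ)
    (hφ : ContDiff ℝ 3 φ) (hsupp : HasCompactSupport φ)
    (x : ℝ* → ℝ*) (η : ℝ*) (hη : Infinitesimal η)
    (hbound : ∀ t : ℝ*,
      |(x (t + ω⁻¹) - x t) / ω⁻¹| ≤ η * hyperExt (fun s : ℝ => s ^ ((2 : ℝ) / 3)) ω)
    (t : ℝ*) :
    Infinitesimal
      ((hyperExt2 (fun s u => φ (s, u)) (t + ω⁻¹) (x (t + ω⁻¹)) -
            hyperExt2 (fun s u => φ (s, u)) t (x t)) / ω⁻¹ -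
        (hyperExt2 (fun s u => deriv (fun a => φ (a, u)) s) t (x t) +
          hyperExt2 (fun s u => deriv (fun b => φ (s, b)) u) t (x t) *
            ((x (t + ω⁻¹) - x t) / ω⁻¹) +
          ω⁻¹ / 2 *
            hyperExt2 (fun s u => deriv (fun b => deriv (fun c => φ (s, c)) b) u) t (x t) *
            ((x (t + ω⁻¹) - x t) / ω⁻¹) ^ 2)) := by
  obtain ⟨C, hC0, hC⟩ := taylor_key φ hφ hsupp
  obtain ⟨τ, hτ⟩ : ∃ f : ℕ → ℝ, ofSeq f = t := Quotient.exists_rep t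
  subst hτ
  obtain ⟨g, hg⟩ : ∃ f : ℕ → ℝ, ofSeq f = η := Quotient.exists_rep η
  subst hg
  obtain ⟨χ, hχ⟩ : ∃ f : ℕ → ℝ, ofSeq f = x (ofSeq τ) := Quotient.exists_rep _
  obtain ⟨χ', hχ'⟩ : ∃ f : ℕ → ℝ, ofSeq f = x (ofSeq τ + ω⁻¹) := Quotient.exists_rep _
  have hb := hbound (ofSeq τ)
  rw [← hχ, ← hχ'] at hb
  obtain ⟨hb1, hb2⟩ := abs_le.mp hb
  have hb1' : ∀ᶠ n in Filter.hyperfilter ℕ,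
      -(g n * ((n : ℝ) ^ ((2 : ℝ) / 3))) ≤ (χ' n - χ n) / ((n : ℝ))⁻¹ :=
    Filter.Germ.coe_le.1 hb1
  have hb2' : ∀ᶠ n in Filter.hyperfilter ℕ,
      (χ' n - χ n) / ((n : ℝ))⁻¹ ≤ g n * ((n : ℝ) ^ ((2 : ℝ) / 3)) :=
    Filter.Germ.coe_le.1 hb2
  have habs : ∀ᶠ n in Filter.hyperfilter ℕ,
      |(χ' n - χ n) / ((n : ℝ))⁻¹| ≤ g n * ((n : ℝ) ^ ((2 : ℝ) / 3)) := by
    filter_upwards [hb1', hb2'] with n h1 h2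
    exact abs_le.mpr ⟨h1, h2⟩
  set e : ℕ → ℝ := fun n =>
    (φ (τ n + ((n : ℝ))⁻¹, χ' n) - φ (τ n, χ n)) / ((n : ℝ))⁻¹ -
      (deriv (fun a => φ (a, χ n)) (τ n) +
        deriv (fun b => φ (τ n, b)) (χ n) * ((χ' n - χ n) / ((n : ℝ))⁻¹) +
        ((n : ℝ))⁻¹ / 2 * deriv (fun b => deriv (fun c => φ (τ n, c)) b) (χ n) *
          ((χ' n - χ n) / ((n : ℝ))⁻¹) ^ 2) with he
  set r : ℕ → ℝ := fun n => C * (((n : ℝ))⁻¹ + g n + g n ^ 3) with hr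
  have hev : ∀ᶠ n in Filter.hyperfilter ℕ, |e n| ≤ r n := by
    have hn1 : ∀ᶠ n in Filter.hyperfilter ℕ, 1 ≤ n :=
      (Filter.eventually_ge_atTop 1).filter_mono Nat.hyperfilter_le_atTop
    filter_upwards [habs, hn1] with n hk hn
    have hnR : (1 : ℝ) ≤ (n : ℝ) := by exact_mod_cast hn
    have h0 : (0 : ℝ) < (n : ℝ) := by linarith
    have hpos : (0 : ℝ) < ((n : ℝ))⁻¹ := by positivity
    set P := (n : ℝ) ^ ((2 : ℝ) / 3) with hP
    have hP0 : 0 < P := Real.rpow_pos_of_pos h0 _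
    set k := χ' n - χ n with hkd
    have hkabs : |k| * (n : ℝ) ≤ g n * P := by
      have habsq : |k / ((n : ℝ))⁻¹| = |k| * (n : ℝ) := by
        rw [abs_div, abs_inv, abs_of_pos h0, div_eq_mul_inv, inv_inv]
      rw [← habsq]
      exact hk
    have hg0 : 0 ≤ g n := by
      nlinarith [abs_nonneg k, hkabs, mul_pos h0 hP0]
    have hkle : |k| ≤ g n := by
      have hPn : P ≤ (n : ℝ) := by
        calc P ≤ (n : ℝ) ^ (1 : ℝ) :=
              Real.rpow_le_rpow_of_exponent_le hnR (by norm_num)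
          _ = (n : ℝ) := Real.rpow_one _
      have h1 : |k| * (n : ℝ) ≤ g n * (n : ℝ) :=
        hkabs.trans (by gcongr)
      exact le_of_mul_le_mul_right h1 h0
    have hP3 : P ^ 3 = (n : ℝ) ^ 2 := by
      rw [hP, ← Real.rpow_natCast ((n : ℝ) ^ ((2 : ℝ) / 3)) 3, ← Real.rpow_mul h0.le,
        ← Real.rpow_natCast (n : ℝ) 2]
      norm_num
    have hk3 : |k| ^ 3 * (n : ℝ) ≤ g n ^ 3 := by
      have h1 : (|k| * (n : ℝ)) ^ 3 ≤ (g n * P) ^ 3 :=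
        pow_le_pow_left₀ (by positivity) hkabs 3
      rw [mul_pow, mul_pow, hP3] at h1
      have h2 : |k| ^ 3 * (n : ℝ) * (n : ℝ) ^ 2 ≤ g n ^ 3 * (n : ℝ) ^ 2 := by
        calc |k| ^ 3 * (n : ℝ) * (n : ℝ) ^ 2 = |k| ^ 3 * (n : ℝ) ^ 3 := by ring
          _ ≤ g n ^ 3 * (n : ℝ) ^ 2 := h1
      exact le_of_mul_le_mul_right h2 (by positivity)
    have hmain := hC (τ n) (χ n) (χ' n) ((n : ℝ))⁻¹ hpos
    calc |e n| ≤ C * (((n : ℝ))⁻¹ + |k| + |k| ^ 3 / ((n : ℝ))⁻¹) := hmain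
      _ ≤ C * (((n : ℝ))⁻¹ + g n + g n ^ 3) := by
          have hdiv : |k| ^ 3 / ((n : ℝ))⁻¹ = |k| ^ 3 * (n : ℝ) := by rw [div_eq_mul_inv, inv_inv]
          rw [hdiv]
          gcongr
      _ = r n := rfl
  have hev2 : ∀ᶠ n in Filter.hyperfilter ℕ, e n ≤ r n := by
    filter_upwards [hev] with n h; exact (abs_le.mp h).2
  have hev1 : ∀ᶠ n in Filter.hyperfilter ℕ, (-r) n ≤ e n := by
    filter_upwards [hev] with n h; exact (abs_le.mp h).1
  rw [← hχ, ← hχ']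
  apply infinitesimal_of_abs_le (w := (C : ℝ*) * (ω⁻¹ + ofSeq g + ofSeq g ^ 3))
  · exact abs_le.mpr ⟨Filter.Germ.coe_le.2 hev1, Filter.Germ.coe_le.2 hev2⟩
  · apply infinitesimal_const_mul
    have h1 : Infinitesimal (ω⁻¹) := by rw [inv_omega]; exact infinitesimal_epsilon
    have h3 : Infinitesimal (ofSeq g ^ 3) := by
      rw [pow_succ, pow_two]
      exact (hη.mul hη).mul hη
    exact (h1.add hη).add h3
end

section
/- Continuous dependence on initial data for grid ODEs with Lipschitz right-hand side: if f satisfies |f(t,x) - f(t,y)| ≤ L|x - y| for all t, x, y (L a real constant), and x(·, x₀), x(·, x₁) are the grid solutions of Δx/Δt = f(t, x) with initial data x₀, x₁ at time 0, then for all grid times t = kε with 0 ≤ kε ≤ T one has |x(t, x₀) - x(t, x₁)| ≤ |x₀ - x₁|·(1 + εL)^k ≤ |x₀ - x₁|·e^{LT}. Consequently if x₀ ~ x₁ with x₀, x₁ bounded and ε infinitesimal, then x(t, x₀) ~ x(t, x₁). -/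
open Hyperreal

private lemma real_pow_le_exp (c : ℝ) (hc : 0 ≤ c) (k : ℕ) (hk : 1 ≤ k) :
    (1 + c / k) ^ k ≤ Real.exp c := by
  have hk0 : (k : ℝ) ≠ 0 := by positivity
  have h1 : 1 + c / k ≤ Real.exp (c / k) := by
    have := Real.add_one_le_exp (c / k)
    linarith
  have h0 : (0:ℝ) ≤ 1 + c / k := by positivity
  calc (1 + c / k) ^ k ≤ Real.exp (c / k) ^ k := pow_le_pow_left₀ h0 h1 k
    _ = Real.exp (k * (c / k)) := by rw [Real.exp_nat_mul]
    _ = Real.exp c := by rw [mul_div_cancel₀ _ hk0]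

/-- continuous dependence on the initial data for grid ODEs with
a Lipschitz right-hand side.  `x` and `y` are the grid solutions (indexed by
the step number `k`, at grid time `k·eps`) with initial data `x 0` and `y 0`.
The error grows at most like `(1 + eps·L)^k ≤ e^{L·T}` on `[0, T]`; hence
infinitesimally close bounded initial data yield infinitesimally close
solutions when the step is infinitesimal. -/
theorem grid_ode_continuous_dependence (eps : ℝ*) (heps : 0 < eps)
    (L T : ℝ) (hL : 0 < L) (hT : 0 < T)
    (f : ℝ* → ℝ* → ℝ*) (hf : ∀ t a b : ℝ*, |f t a - f t b| ≤ L * |a - b|)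
    (x y : ℕ → ℝ*)
    (hx : ∀ k : ℕ, x (k + 1) = x k + eps * f (k * eps) (x k))
    (hy : ∀ k : ℕ, y (k + 1) = y k + eps * f (k * eps) (y k)) :
    (∀ k : ℕ, (k : ℝ*) * eps ≤ T →
        |x k - y k| ≤ |x 0 - y 0| * (1 + eps * L) ^ k ∧
          |x 0 - y 0| * (1 + eps * L) ^ k ≤ |x 0 - y 0| * (Real.exp (L * T) : ℝ)) ∧
      (Infinitesimal eps → Infinitesimal (x 0 - y 0) →
        (∃ r : ℝ, |x 0| < r) → (∃ r : ℝ, |y 0| < r) →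
        ∀ k : ℕ, (k : ℝ*) * eps ≤ T → Infinitesimal (x k - y k)) := by
  have hLpos : (0:ℝ*) < (L:ℝ*) := by exact_mod_cast hL
  have hbase : (0:ℝ*) < 1 + eps * L := by nlinarith
  -- growth bound by induction, for all k
  have hgrow : ∀ k : ℕ, |x k - y k| ≤ |x 0 - y 0| * (1 + eps * L) ^ k := by
    intro k
    induction k with
    | zero => simp
    | succ k ih =>
        have hstep : |x (k+1) - y (k+1)| ≤ |x k - y k| * (1 + eps * L) := by
          rw [hx k, hy k]
          have h1 : x k + eps * f (k * eps) (x k) - (y k + eps * f (k * eps) (y k))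
              = (x k - y k) + eps * (f (k * eps) (x k) - f (k * eps) (y k)) := by ring
          rw [h1]
          calc |(x k - y k) + eps * (f (k * eps) (x k) - f (k * eps) (y k))|
              ≤ |x k - y k| + |eps * (f (k * eps) (x k) - f (k * eps) (y k))| :=
                abs_add_le _ _
            _ = |x k - y k| + eps * |f (k * eps) (x k) - f (k * eps) (y k)| := by
                rw [abs_mul, abs_of_pos heps]
            _ ≤ |x k - y k| + eps * (L * |x k - y k|) := by
                have := hf (k * eps) (x k) (y k)
                nlinarith
            _ = |x k - y k| * (1 + eps * L) := by ring
        calc |x (k+1) - y (k+1)| ≤ |x k - y k| * (1 + eps * L) := hstep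
          _ ≤ (|x 0 - y 0| * (1 + eps * L) ^ k) * (1 + eps * L) := by
              exact mul_le_mul_of_nonneg_right ih hbase.le
          _ = |x 0 - y 0| * (1 + eps * L) ^ (k+1) := by ring
  -- exp bound
  have hexp : ∀ k : ℕ, (k : ℝ*) * eps ≤ T →
      (1 + eps * L) ^ k ≤ ((Real.exp (L * T) : ℝ) : ℝ*) := by
    intro k hk
    rcases Nat.eq_zero_or_pos k with hk0 | hk1
    · subst hk0
      simp only [pow_zero]
      have : (1:ℝ) ≤ Real.exp (L * T) := Real.one_le_exp (by positivity)
      exact_mod_cast this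
    · have hkR : (0:ℝ) < (k:ℝ) := by exact_mod_cast hk1
      have hkH : (0:ℝ*) < (k:ℝ*) := by exact_mod_cast hk1
      have heL : eps * L ≤ ((L * T / k : ℝ) : ℝ*) := by
        have heps' : eps ≤ ((T / k : ℝ) : ℝ*) := by
          have hcast : ((T / k : ℝ) : ℝ*) = (T : ℝ*) / (k : ℝ*) := by norm_cast
          rw [hcast, le_div_iff₀ hkH]
          nlinarith [hk]
        calc eps * L ≤ ((T / k : ℝ) : ℝ*) * L :=
              mul_le_mul_of_nonneg_right heps' hLpos.le
          _ = ((L * T / k : ℝ) : ℝ*) := by push_cast; ring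
      have hb2 : (1 + eps * L) ^ k ≤ (1 + ((L * T / k : ℝ) : ℝ*)) ^ k := by
        apply pow_le_pow_left₀ hbase.le
        linarith
      have hreal : ((1 + L * T / k : ℝ)) ^ k ≤ Real.exp (L * T) :=
        real_pow_le_exp (L * T) (by positivity) k hk1
      calc (1 + eps * L) ^ k ≤ (1 + ((L * T / k : ℝ) : ℝ*)) ^ k := hb2
        _ = (((1 + L * T / k : ℝ)) ^ k : ℝ) := by norm_cast
        _ ≤ ((Real.exp (L * T) : ℝ) : ℝ*) := by exact_mod_cast hreal
  constructor
  · intro k hk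
    refine ⟨hgrow k, ?_⟩
    exact mul_le_mul_of_nonneg_left (hexp k hk) (abs_nonneg _)
  · intro _ hd _ _ k hk
    rw [infinitesimal_def]
    intro r hr
    set C := Real.exp (L * T) with hC
    have hCpos : (0:ℝ) < C := Real.exp_pos _
    have hdr : |x 0 - y 0| < ((r / C : ℝ) : ℝ*) := by
      have := (infinitesimal_def.mp hd) (r / C) (by positivity)
      rw [abs_lt]
      exact_mod_cast this
    have hzk : |x k - y k| < r := by
      calc |x k - y k| ≤ |x 0 - y 0| * (1 + eps * L) ^ k := hgrow k
        _ ≤ |x 0 - y 0| * ((C : ℝ) : ℝ*) :=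
            mul_le_mul_of_nonneg_left (hexp k hk) (abs_nonneg _)
        _ < ((r / C : ℝ) : ℝ*) * ((C : ℝ) : ℝ*) := by
            apply mul_lt_mul_of_pos_right hdr
            exact_mod_cast hCpos
        _ = ((r : ℝ) : ℝ*) := by
            push_cast
            rw [div_mul_cancel₀]
            exact_mod_cast hCpos.ne'
    rw [abs_lt] at hzk
    exact hzk
end
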